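/- Let δ* minimize ‖y − Bδ‖² over δ ⪰ 0 and let Λ* be its support. If the columns of B indexed by Λ* are linearly independent, then (B_{Λ*})⁺ y ≻ 0 (strictly positive entrywise) and yᵀ P_{Λ*}^⊥ b_i ≤ 0 for every i ∉ Λ*. -/

import Mathlib

open Matrix

variable {m n : ℕ}

/-- Squared Euclidean norm of a real vector. -/
def sqn {k : ℕ} (v : Fin k → ℝ) : ℝ := ∑ i, v i ^ 2

/-- Submatrix of the columns of `B` with indices in `Λ`. -/
noncomputable def colSub (B : Matrix (Fin m) (Fin n) ℝ) (Λ : Finset (Fin n)) :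
    Matrix (Fin m) {i // i ∈ Λ} ℝ := Matrix.of fun r j => B r j.1

/-- Pseudoinverse `(B_Λᵀ B_Λ)⁻¹ B_Λᵀ` of the column submatrix `B_Λ`. -/
noncomputable def pinvSub (B : Matrix (Fin m) (Fin n) ℝ) (Λ : Finset (Fin n)) :
    Matrix {i // i ∈ Λ} (Fin m) ℝ :=
  ((colSub B Λ)ᵀ * colSub B Λ)⁻¹ * (colSub B Λ)ᵀ

/-- Orthogonal projector onto the orthogonal complement of the column space of `B_Λ`. -/
noncomputable def projPerp (B : Matrix (Fin m) (Fin n) ℝ) (Λ : Finset (Fin n)) :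
    Matrix (Fin m) (Fin m) ℝ := 1 - colSub B Λ * pinvSub B Λ

lemma sqn_eq_dot {k : ℕ} (v : Fin k → ℝ) : sqn v = dotProduct v v := by
  simp [sqn, dotProduct, pow_two]

lemma dot_self_nonneg {k : Type*} [Fintype k] (v : k → ℝ) : 0 ≤ dotProduct v v :=
  Finset.sum_nonneg fun i _ => mul_self_nonneg _

lemma mulVec_dot' {p q : Type*} [Fintype p] [Fintype q]
    (M : Matrix p q ℝ) (x : q → ℝ) (z : p → ℝ) :
    dotProduct (M.mulVec x) z = dotProduct x (Mᵀ.mulVec z) := by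
  rw [dotProduct_comm (M.mulVec x) z, dotProduct_mulVec,
    ← Matrix.mulVec_transpose, dotProduct_comm]

/-- Derivative condition from minimality along admissible directions. -/
lemma grad_cond (B : Matrix (Fin m) (Fin n) ℝ) (y : Fin m → ℝ)
    (δs : Fin n → ℝ)
    (hmin : ∀ δ : Fin n → ℝ, (∀ j, 0 ≤ δ j) →
      sqn (y - B.mulVec δs) ≤ sqn (y - B.mulVec δ))
    (v : Fin n → ℝ) (ε : ℝ) (hε : 0 < ε)
    (hadm : ∀ t : ℝ, 0 < t → t ≤ ε → ∀ j, 0 ≤ δs j + t * v j) :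
    dotProduct (y - B.mulVec δs) (B.mulVec v) ≤ 0 := by
  set r := y - B.mulVec δs with hr
  set w := B.mulVec v with hw
  set c := dotProduct r w with hc
  set q := dotProduct w w with hq
  have hq0 : 0 ≤ q := dot_self_nonneg w
  have key : ∀ t : ℝ, 0 < t → t ≤ ε → 2 * c ≤ t * q := by
    intro t ht htε
    have hnn : ∀ j, 0 ≤ δs j + t * v j := hadm t ht htε
    have hm := hmin (fun j => δs j + t * v j) hnn
    have hBv : B.mulVec (fun j => δs j + t * v j) = B.mulVec δs + t • w := by
      have hfun : (fun j => δs j + t * v j) = δs + t • v := by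
        funext j; simp [smul_eq_mul]
      rw [hfun, Matrix.mulVec_add, Matrix.mulVec_smul]
    rw [hBv] at hm
    have hexp : y - (B.mulVec δs + t • w) = r - t • w := by
      rw [hr]; abel
    rw [hexp, sqn_eq_dot, sqn_eq_dot] at hm
    have hdot : dotProduct (r - t • w) (r - t • w)
        = dotProduct r r - 2 * t * c + t ^ 2 * q := by
      simp only [sub_dotProduct, dotProduct_sub, smul_dotProduct, dotProduct_smul,
        smul_eq_mul, hc, hq]
      have hcomm : dotProduct w r = c := by rw [hc, dotProduct_comm]
      rw [hcomm]; ring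
    rw [hdot] at hm
    nlinarith
  by_contra hcon
  push_neg at hcon
  have hqpos : 0 < q + 1 := by linarith
  set t := min ε (c / (q + 1)) with ht
  have ht0 : 0 < t := lt_min hε (div_pos hcon hqpos)
  have htε : t ≤ ε := min_le_left _ _
  have h1 := key t ht0 htε
  have h2 : t * q ≤ (c / (q + 1)) * q :=
    mul_le_mul_of_nonneg_right (min_le_right _ _) hq0
  have h3 : (c / (q + 1)) * q ≤ c := by
    rw [div_mul_eq_mul_div, div_le_iff₀ hqpos]
    nlinarith
  linarith

/-- Converse support-recovery conditions: at an NNLS minimizer with support `Λ*` whose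
columns are linearly independent, condition C1 holds strictly and C2 holds weakly. -/
theorem nnls_support_necessary (B : Matrix (Fin m) (Fin n) ℝ) (y : Fin m → ℝ)
    (δs : Fin n → ℝ) (hpos : ∀ j, 0 ≤ δs j)
    (hmin : ∀ δ : Fin n → ℝ, (∀ j, 0 ≤ δ j) →
      sqn (y - B.mulVec δs) ≤ sqn (y - B.mulVec δ))
    (Λs : Finset (Fin n)) (hΛs : ∀ j, j ∈ Λs ↔ 0 < δs j)
    (hLI : LinearIndependent ℝ fun j : {i // i ∈ Λs} => (fun r => B r j.1 : Fin m → ℝ)) :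
    (∀ j : {i // i ∈ Λs}, 0 < (pinvSub B Λs).mulVec y j) ∧
    (∀ i ∉ Λs, dotProduct y ((projPerp B Λs).mulVec fun r => B r i) ≤ 0) := by
  classical
  set A := colSub B Λs with hA
  set G := Aᵀ * A with hG
  set r := y - B.mulVec δs with hr
  -- r ⬝ col i ≤ 0 for all i
  have hle : ∀ i : Fin n, dotProduct r (fun k => B k i) ≤ 0 := by
    intro i
    have h := grad_cond B y δs hmin (Pi.single i 1) 1 one_pos
      (fun t ht _ j => by
        rcases eq_or_ne j i with rfl | hne
        · simp only [Pi.single_eq_same, mul_one]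
          linarith [hpos j, ht.le]
        · simp [Pi.single_eq_of_ne hne, hpos j])
    rw [Matrix.mulVec_single] at h
    have hmo : (fun k => B k i * 1) = (fun k => B k i) := by funext k; ring
    rw [show MulOpposite.op (1:ℝ) • B.col i = (fun k => B k i) from by funext k; simp] at h
    simpa [hr] using h
  -- r ⬝ col j = 0 for j ∈ Λs
  have heq : ∀ j, j ∈ Λs → dotProduct r (fun k => B k j) = 0 := by
    intro j hj
    have hδj : 0 < δs j := (hΛs j).1 hj
    have h := grad_cond B y δs hmin (-Pi.single j 1) (δs j) hδj
      (fun t ht htε k => by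
        rcases eq_or_ne k j with rfl | hne
        · simp only [Pi.neg_apply, Pi.single_eq_same, mul_neg, mul_one]
          linarith
        · simp [Pi.single_eq_of_ne hne, hpos k])
    rw [Matrix.mulVec_neg, Matrix.mulVec_single, dotProduct_neg] at h
    have hmo : (fun k => B k j * 1) = (fun k => B k j) := by funext k; ring
    rw [show MulOpposite.op (1:ℝ) • B.col j = (fun k => B k j) from by funext k; simp] at h
    simp only [← hr] at h
    have h2 := hle j
    linarith
  -- stationarity: Aᵀ r = 0
  have hstat : Aᵀ.mulVec r = 0 := by
    funext j
    have hj := heq j.1 j.2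
    simpa [Matrix.mulVec, Matrix.transpose_apply, hA, colSub, dotProduct,
      mul_comm] using hj
  -- restriction of δs to Λs
  set δΛ : {i // i ∈ Λs} → ℝ := fun j => δs j.1 with hδΛ
  have hAδ : A.mulVec δΛ = B.mulVec δs := by
    funext k
    simp only [Matrix.mulVec, dotProduct, hA, colSub, Matrix.of_apply, hδΛ]
    calc ∑ x : {i // i ∈ Λs}, B k x.1 * δs x.1
        = ∑ j ∈ Λs, B k j * δs j := Finset.sum_coe_sort Λs (fun j => B k j * δs j)
      _ = ∑ x : Fin n, B k x * δs x := by
          apply Finset.sum_subset (Finset.subset_univ Λs)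
          intro j _ hj
          have hz : δs j = 0 := by
            rcases (hpos j).eq_or_lt with h | h
            · exact h.symm
            · exact absurd ((hΛs j).2 h) hj
          simp [hz]
  -- G is invertible
  have hAinj : Function.Injective A.mulVec := by
    rw [Matrix.mulVec_injective_iff]
    exact hLI
  have hGunit : IsUnit G := by
    rw [← Matrix.mulVec_injective_iff_isUnit]
    intro x x' hxx
    have hsub : G.mulVec (x - x') = 0 := by
      rw [Matrix.mulVec_sub, hxx, sub_self]
    have hdz : dotProduct (A.mulVec (x - x')) (A.mulVec (x - x')) = 0 := by
      have h0 : dotProduct (x - x') (G.mulVec (x - x')) = 0 := by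
        rw [hsub]; simp
      rw [hG, ← Matrix.mulVec_mulVec, dotProduct_mulVec,
        Matrix.vecMul_transpose] at h0
      exact h0
    have hAz : A.mulVec (x - x') = 0 := dotProduct_self_eq_zero.mp hdz
    have hAe : A.mulVec (x - x') = A.mulVec 0 := by rw [hAz, Matrix.mulVec_zero]
    exact sub_eq_zero.mp (hAinj hAe)
  have hGdet : IsUnit G.det := (Matrix.isUnit_iff_isUnit_det G).mp hGunit
  have hGsym : Gᵀ = G := by
    rw [hG, Matrix.transpose_mul, Matrix.transpose_transpose]
  -- G δΛ = Aᵀ y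
  have hGδ : G.mulVec δΛ = Aᵀ.mulVec y := by
    have hdiff : Aᵀ.mulVec y - Aᵀ.mulVec (B.mulVec δs) = 0 := by
      rw [← Matrix.mulVec_sub, ← hr, hstat]
    have h2 : Aᵀ.mulVec y = Aᵀ.mulVec (B.mulVec δs) := sub_eq_zero.mp hdiff
    rw [hG, ← Matrix.mulVec_mulVec, hAδ, h2]
  have hpv : pinvSub B Λs = G⁻¹ * Aᵀ := rfl
  -- pinv y = δΛ
  have hpinv : (pinvSub B Λs).mulVec y = δΛ := by
    rw [hpv, ← Matrix.mulVec_mulVec, ← hGδ, Matrix.mulVec_mulVec,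
      Matrix.nonsing_inv_mul G hGdet, Matrix.one_mulVec]
  constructor
  · intro j
    rw [hpinv]
    exact (hΛs j.1).1 j.2
  · intro i hi
    have key : dotProduct y ((projPerp B Λs).mulVec fun k => B k i)
        = dotProduct r (fun k => B k i) := by
      rw [projPerp, Matrix.sub_mulVec, dotProduct_sub, Matrix.one_mulVec]
      have h1 : dotProduct y ((A * pinvSub B Λs).mulVec fun k => B k i)
          = dotProduct (B.mulVec δs) (fun k => B k i) := by
        calc dotProduct y ((A * pinvSub B Λs).mulVec fun k => B k i)
            = dotProduct y (A.mulVec ((pinvSub B Λs).mulVec fun k => B k i)) := by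
              rw [Matrix.mulVec_mulVec]
          _ = dotProduct (Aᵀ.mulVec y) ((pinvSub B Λs).mulVec fun k => B k i) := by
              rw [dotProduct_mulVec, ← Matrix.mulVec_transpose]
          _ = dotProduct (G.mulVec δΛ)
                (G⁻¹.mulVec (Aᵀ.mulVec fun k => B k i)) := by
              rw [hGδ, hpv, ← Matrix.mulVec_mulVec]
          _ = dotProduct δΛ (Gᵀ.mulVec (G⁻¹.mulVec (Aᵀ.mulVec fun k => B k i))) :=
              mulVec_dot' G δΛ _
          _ = dotProduct δΛ (Aᵀ.mulVec fun k => B k i) := by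
              rw [hGsym, Matrix.mulVec_mulVec, Matrix.mul_nonsing_inv G hGdet,
                Matrix.one_mulVec]
          _ = dotProduct (A.mulVec δΛ) (fun k => B k i) :=
              (mulVec_dot' A δΛ _).symm
          _ = dotProduct (B.mulVec δs) (fun k => B k i) := by rw [hAδ]
      rw [h1, hr, sub_dotProduct]
    rw [key]
    exact hle i
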